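/- Let T > 0, let a : [0,T] → ℝ be continuous, and let ξ₀ ≥ 0. Define ξ : [0,T] → ℝ by ξ(t) = (max(√ξ₀ - (1/2)∫₀ᵗ a(τ)dτ, 0))². Then ξ is differentiable on [0,T], ξ(t) ≥ 0 for all t, ξ(0) = ξ₀, and ξ'(t) + a(t)·√(ξ(t)) = 0 for all t ∈ [0,T]. -/

import Mathlib

lemma hasDerivAt_sq_max (x : ℝ) :
    HasDerivAt (fun y : ℝ => (max y 0)^2) (2 * max x 0) x := by
  rcases lt_trichotomy x 0 with hx | hx | hx
  · have : (fun y : ℝ => (max y 0)^2) =ᶠ[nhds x] fun _ => (0:ℝ) := by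
      filter_upwards [Iio_mem_nhds hx] with y hy
      simp [max_eq_right (le_of_lt (Set.mem_Iio.mp hy))]
    have h0 : HasDerivAt (fun _ : ℝ => (0:ℝ)) 0 x := hasDerivAt_const _ _
    simpa [max_eq_right hx.le] using h0.congr_of_eventuallyEq this
  · subst hx
    rw [hasDerivAt_iff_isLittleO]
    simp only [max_self, ne_eq, OfNat.ofNat_ne_zero, not_false_eq_true, zero_pow,
      smul_eq_mul, mul_zero, sub_zero, mul_comm]
    rw [Asymptotics.isLittleO_iff]
    intro c hc
    filter_upwards [Metric.ball_mem_nhds 0 hc] with y hy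
    simp only [Metric.mem_ball, Real.dist_eq, sub_zero] at hy
    have h1 : |(max y 0)^2| ≤ |y| * |y| := by
      rw [abs_of_nonneg (sq_nonneg _), pow_two]
      have : max y 0 ≤ |y| := max_le (le_abs_self y) (abs_nonneg y)
      exact mul_le_mul this this (le_max_right y 0) (abs_nonneg y)
    calc ‖(max y 0)^2 - y * (0 * 2)‖ = ‖(max y 0)^2‖ := by ring_nf
      _ ≤ |y| * |y| := h1
      _ ≤ c * ‖y‖ := mul_le_mul_of_nonneg_right hy.le (abs_nonneg y)
  · have : (fun y : ℝ => (max y 0)^2) =ᶠ[nhds x] fun y => y^2 := by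
      filter_upwards [Ioi_mem_nhds hx] with y hy
      simp [max_eq_left (le_of_lt (Set.mem_Ioi.mp hy))]
    have h0 : HasDerivAt (fun y : ℝ => y^2) (2*x) x := by
      simpa using (hasDerivAt_pow 2 x)
    simpa [max_eq_left hx.le] using h0.congr_of_eventuallyEq this

/-- The explicit formula `ξ(t) = (max(√ξ₀ - ½∫₀ᵗ a, 0))²` solves the Cauchy problem
`ξ' + a √ξ = 0`, `ξ(0) = ξ₀`, and is nonnegative and differentiable on `[0,T]`. -/
theorem stmt12 (T : ℝ) (hT : 0 < T) (a : ℝ → ℝ)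
    (ha : ContinuousOn a (Set.Icc 0 T)) (ξ0 : ℝ) (hξ0 : 0 ≤ ξ0) :
    (∀ t ∈ Set.Icc (0:ℝ) T,
        0 ≤ (max (Real.sqrt ξ0 - (1/2) * ∫ τ in (0:ℝ)..t, a τ) 0)^2) ∧
    (max (Real.sqrt ξ0 - (1/2) * ∫ τ in (0:ℝ)..(0:ℝ), a τ) 0)^2 = ξ0 ∧
    (∀ t ∈ Set.Icc (0:ℝ) T,
        HasDerivWithinAt
          (fun t => (max (Real.sqrt ξ0 - (1/2) * ∫ τ in (0:ℝ)..t, a τ) 0)^2)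
          (-(a t * Real.sqrt ((max (Real.sqrt ξ0 - (1/2) * ∫ τ in (0:ℝ)..t, a τ) 0)^2)))
          (Set.Icc 0 T) t) := by
  refine ⟨fun t _ => sq_nonneg _, ?_, ?_⟩
  · simp [Real.sq_sqrt hξ0]
  · intro t ht
    haveI : Fact (t ∈ Set.Icc (0:ℝ) T) := ⟨ht⟩
    have hint : IntervalIntegrable a MeasureTheory.volume 0 t := by
      apply (ha.mono _).intervalIntegrable
      rw [Set.uIcc_of_le ht.1]
      exact Set.Icc_subset_Icc le_rfl ht.2
    have hF : HasDerivWithinAt (fun u => ∫ τ in (0:ℝ)..u, a τ) (a t)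
        (Set.Icc 0 T) t :=
      intervalIntegral.integral_hasDerivWithinAt_right hint
        (ha.stronglyMeasurableAtFilter_nhdsWithin measurableSet_Icc t)
        (ha t ht)
    have hg : HasDerivWithinAt
        (fun u => Real.sqrt ξ0 - (1/2) * ∫ τ in (0:ℝ)..u, a τ)
        (-(1/2 * a t)) (Set.Icc 0 T) t := by
      simpa using ((hF.const_mul (1/2 : ℝ)).const_sub (Real.sqrt ξ0))
    have := (hasDerivAt_sq_max
        (Real.sqrt ξ0 - (1/2) * ∫ τ in (0:ℝ)..t, a τ)).comp_hasDerivWithinAt t hg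
    have hsqrt : Real.sqrt ((max (Real.sqrt ξ0 - (1/2) * ∫ τ in (0:ℝ)..t, a τ) 0)^2)
        = max (Real.sqrt ξ0 - (1/2) * ∫ τ in (0:ℝ)..t, a τ) 0 :=
      Real.sqrt_sq (le_max_right _ _)
    rw [hsqrt]
    refine this.congr_deriv ?_
    ring
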